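/- Every graph G with infinite colouring number possesses a good well-ordering of its vertex set of order type equal to the cardinality of V(G), i.e., a well-ordering of length |V(G)| in which every vertex has fewer than col(G) neighbours preceding it. -/

import Mathlib

open Cardinal

universe u v

/-- A well-ordering of the vertices of `G` in which every vertex has
fewer than `μ` neighbours preceding it (a *good* well-ordering for `μ`). -/
def HasGoodOrder {V : Type u} (G : SimpleGraph V) (μ : Cardinal.{u}) : Prop :=
  ∃ r : V → V → Prop, IsWellOrder V r ∧ ∀ v : V, #{w : V | G.Adj v w ∧ r w v} < μ

/-- The colouring number of `G`: the least cardinal `κ` admitting a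
well-ordering of the vertices in which each vertex has fewer than `κ`
earlier neighbours. -/
noncomputable def col {V : Type u} (G : SimpleGraph V) : Cardinal.{u} :=
  sInf {μ : Cardinal.{u} | HasGoodOrder G μ}

/-- `X` is robust (for `μ`): every vertex outside `X` has fewer than `μ`
neighbours inside `X`. -/
def Robust {V : Type u} (G : SimpleGraph V) (μ : Cardinal.{u}) (X : Set V) : Prop :=
  ∀ v ∉ X, #(G.neighborSet v ∩ X : Set V) < μ

/-- `G` contains a `μ`-barricade as a subgraph: disjoint vertex sets `A`, `B`
with `|A| < |B|` such that every vertex of `B` has at least `μ` neighbours in `A`. -/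
def HasBarricade {V : Type u} (G : SimpleGraph V) (μ : Cardinal.{u}) : Prop :=
  ∃ A B : Set V, Disjoint A B ∧ #A < #B ∧
    ∀ b ∈ B, μ ≤ #(G.neighborSet b ∩ A : Set V)

/-- `G` contains a `μ`-obstruction of type I as a subgraph: disjoint sets `A`, `B`
with `|A| = λ ≥ μ`, `|B| = λ⁺`, every vertex of `B` having at least `μ`
neighbours in `A` and every vertex of `A` having `λ⁺` neighbours in `B`. -/
def HasTypeIObstruction {V : Type u} (G : SimpleGraph V) (μ : Cardinal.{u}) : Prop :=
  ∃ (A B : Set V) (lam : Cardinal.{u}), Disjoint A B ∧ μ ≤ lam ∧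
    #A = lam ∧ #B = Order.succ lam ∧
    (∀ b ∈ B, μ ≤ #(G.neighborSet b ∩ A : Set V)) ∧
    (∀ a ∈ A, #(G.neighborSet a ∩ B : Set V) = Order.succ lam)

/-- `G` itself is a `μ`-obstruction of type I: a bipartite graph with
bipartition `(A, B)` satisfying the type I conditions. -/
def IsTypeIObstruction {V : Type u} (G : SimpleGraph V) (μ : Cardinal.{u}) : Prop :=
  ∃ (A B : Set V) (lam : Cardinal.{u}), Disjoint A B ∧ A ∪ B = Set.univ ∧
    (∀ a b, G.Adj a b → (a ∈ A ∧ b ∈ B) ∨ (a ∈ B ∧ b ∈ A)) ∧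
    μ ≤ lam ∧ #A = lam ∧ #B = Order.succ lam ∧
    (∀ b ∈ B, μ ≤ #(G.neighborSet b ∩ A : Set V)) ∧
    (∀ a ∈ A, #(G.neighborSet a ∩ B : Set V) = Order.succ lam)

/-- `C` is closed and unbounded in the ordinal `o`. -/
def IsClubIn (C : Set Ordinal.{v}) (o : Ordinal.{v}) : Prop :=
  (∀ a < o, ∃ b ∈ C, a ≤ b ∧ b < o) ∧
  (∀ a < o, a ≠ 0 → sSup (C ∩ Set.Iio a) = a → a ∈ C)

/-- `S` is stationary in the ordinal `o`: it meets every club subset of `o`. -/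
def IsStationaryIn (S : Set Ordinal.{v}) (o : Ordinal.{v}) : Prop :=
  ∀ C : Set Ordinal.{v}, IsClubIn C o → (S ∩ C ∩ Set.Iio o).Nonempty

/-- The set `T_H` of vertices `α` (ordinals) with `cf α = cf μ`, whose set of
neighbours below `α` has order type `μ` and supremum `α`. -/
noncomputable def typeIITarget (H : SimpleGraph Ordinal.{v}) (μ : Cardinal.{v}) :
    Set Ordinal.{v} :=
  {α | α.cof = μ.ord.cof ∧
    Ordinal.type (Subrel ((· < ·) : Ordinal.{v} → Ordinal.{v} → Prop)
      (· ∈ H.neighborSet α ∩ Set.Iio α)) = Ordinal.lift.{v + 1} μ.ord ∧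
    sSup (H.neighborSet α ∩ Set.Iio α) = α}

/-- `H` is a `μ`-obstruction of type II with vertex set the regular cardinal
`κ > μ` (realised as the ordinals below `κ`): `T_H` is stationary in `κ`. -/
def IsTypeIIObstruction (H : SimpleGraph Ordinal.{v}) (μ κ : Cardinal.{v}) : Prop :=
  μ < κ ∧ κ.IsRegular ∧ (∀ a b, H.Adj a b → a < κ.ord ∧ b < κ.ord) ∧
  IsStationaryIn (typeIITarget H μ) κ.ord

/-- `G` contains a `μ`-obstruction of type II as a subgraph. -/
def HasTypeIIObstruction {V : Type u} (G : SimpleGraph V) (μ : Cardinal.{v}) : Prop :=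
  ∃ (κ : Cardinal.{v}) (H : SimpleGraph Ordinal.{v}) (f : Ordinal.{v} → V),
    Set.InjOn f (Set.Iio κ.ord) ∧ (∀ a b, H.Adj a b → G.Adj (f a) (f b)) ∧
    IsTypeIIObstruction H μ κ

/-- `G` contains a complete subgraph on `μ` vertices. -/
def HasCompleteSubgraph {V : Type u} (G : SimpleGraph V) (μ : Cardinal.{u}) : Prop :=
  ∃ S : Set V, #S = μ ∧ S.Pairwise G.Adj

/-- `G` contains an induced copy of the complete bipartite graph `K_{k,ω}`. -/
def HasInducedKkOmega {V : Type u} (G : SimpleGraph V) (k : ℕ) : Prop :=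
  ∃ A B : Set V, Disjoint A B ∧ #A = (k : Cardinal.{u}) ∧ #B = ℵ₀ ∧
    (∀ a ∈ A, ∀ b ∈ B, G.Adj a b) ∧
    (∀ a ∈ A, ∀ a' ∈ A, a ≠ a' → ¬ G.Adj a a') ∧
    (∀ b ∈ B, ∀ b' ∈ B, b ≠ b' → ¬ G.Adj b b')

/-- Every type carries a well-order of order type `(#V).ord`, and all its
proper initial segments are small. -/
private lemma exists_ord_order (V : Type u) :
    ∃ (q : V → V → Prop) (wo : IsWellOrder V q),
      @Ordinal.type V q wo = (#V).ord ∧ ∀ v : V, #{w : V | q w v} < max (#V) ℵ₀ := by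
  have h1 : #((#V).ord.ToType) = #V := by rw [Cardinal.mk_toType, Cardinal.card_ord]
  obtain ⟨g⟩ := Cardinal.eq.1 h1.symm
  haveI hwo' : IsWellOrder (#V).ord.ToType (· < ·) := isWellOrder_lt
  let q : V → V → Prop := fun a b => g a < g b
  have iso : q ≃r ((· < ·) : (#V).ord.ToType → (#V).ord.ToType → Prop) :=
    ⟨g, Iff.rfl⟩
  haveI wo : IsWellOrder V q := iso.toRelEmbedding.isWellOrder
  have htype : Ordinal.type q = (#V).ord :=
    (Ordinal.type_eq.2 ⟨iso⟩).trans (Ordinal.type_toType _)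
  refine ⟨q, wo, htype, fun v => ?_⟩
  have h2 : Ordinal.typein q v < (#V).ord := htype ▸ Ordinal.typein_lt_type q v
  have h3 : Ordinal.typein q v < (max (#V) ℵ₀).ord :=
    lt_of_lt_of_le h2 (Cardinal.ord_le_ord.2 (le_max_left _ _))
  have h4 := Cardinal.lt_ord.1 h3
  rw [Ordinal.card_typein] at h4
  exact h4

/-- A well-order all of whose proper initial segments are strictly smaller than
the whole type has order type `(#V).ord`. -/
private lemma type_eq_ord_of_small {V : Type u} (s : V → V → Prop) (wo : IsWellOrder V s)
    (h : ∀ v : V, #{w : V | s w v} < #V) : @Ordinal.type V s wo = (#V).ord := by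
  refine le_antisymm ?_ (Cardinal.ord_le.2 (Ordinal.card_type s).ge)
  by_contra hlt
  push_neg at hlt
  obtain ⟨x, hx⟩ := Ordinal.typein_surj s hlt
  have h5 : #{w : V | s w x} = (Ordinal.typein s x).card := Ordinal.card_typein x
  rw [hx, Cardinal.card_ord] at h5
  exact absurd (h5 ▸ h x) (lt_irrefl _)

/-- every graph with infinite colouring number has a good
well-ordering of its vertices of order type `|V(G)|`. -/
theorem stmt6 {V : Type u} (G : SimpleGraph V) (h : ℵ₀ ≤ col G) :
    ∃ (r : V → V → Prop) (wo : IsWellOrder V r),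
      @Ordinal.type V r wo = (#V).ord ∧
      ∀ v : V, #{w : V | G.Adj v w ∧ r w v} < col G := by
  classical
  -- the defining set of `col G` is nonempty, so `col G` itself admits a good order
  have hne : {μ : Cardinal.{u} | HasGoodOrder G μ}.Nonempty := by
    refine ⟨Order.succ #V, WellOrderingRel, inferInstance, fun v => ?_⟩
    exact lt_of_le_of_lt (Cardinal.mk_set_le _) (Order.lt_succ _)
  have hmem : HasGoodOrder G (col G) := csInf_mem hne
  set μ := col G with hμ
  obtain ⟨r, wor, hr⟩ := hmem
  obtain ⟨q, woq, hqtype, hqsmall⟩ := exists_ord_order V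
  by_cases hcase : #V ≤ μ
  · -- easy case: any well-order of type `(#V).ord` is good
    refine ⟨q, woq, hqtype, fun v => ?_⟩
    have h1 : #{w : V | G.Adj v w ∧ q w v} ≤ #{w : V | q w v} :=
      Cardinal.mk_le_mk_of_subset (fun w hw => hw.2)
    exact lt_of_lt_of_le (lt_of_le_of_lt h1 (hqsmall v)) (max_le hcase h)
  · -- hard case: `μ = col G < #V`
    push_neg at hcase
    have hκinf : ℵ₀ ≤ #V := le_of_lt (lt_of_le_of_lt h hcase)
    have hqsmall' : ∀ v : V, #{w : V | q w v} < #V := by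
      intro v
      have := hqsmall v
      rwa [max_eq_left hκinf] at this
    -- the downward closure of a vertex under earlier neighbours
    set cl : V → Set V :=
      fun u => {w | Relation.ReflTransGen (fun x y => G.Adj x y ∧ r y x) u w} with hcl
    have cl_self : ∀ u : V, u ∈ cl u := fun u => Relation.ReflTransGen.refl
    have cl_step : ∀ u v w : V, v ∈ cl u → G.Adj v w → r w v → w ∈ cl u :=
      fun u v w hv ha hrwv => Relation.ReflTransGen.tail hv ⟨ha, hrwv⟩
    -- each closure has size at most μ
    have cl_card : ∀ u : V, #(cl u) ≤ μ := by
      intro u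
      set C : ℕ → Set V :=
        fun n => Nat.rec {u} (fun _ Cn => Cn ∪ ⋃ v ∈ Cn, {w | G.Adj v w ∧ r w v}) n with hC
      have hCcard : ∀ n, #(C n) ≤ μ := by
        intro n
        induction n with
        | zero =>
          have : #(C 0) = 1 := Cardinal.mk_singleton u
          exact this.trans_le (Cardinal.one_le_aleph0.trans h)
        | succ n ih =>
          have hsucc : C (n + 1) = C n ∪ ⋃ v ∈ C n, {w | G.Adj v w ∧ r w v} := rfl
          have hb : #(⋃ v ∈ C n, {w | G.Adj v w ∧ r w v}) ≤ μ := by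
            rcases isEmpty_or_nonempty (↥(C n)) with he | hne'
            · have h0 : #(↥(C n)) = 0 := Cardinal.mk_eq_zero _
              refine le_trans (Cardinal.mk_biUnion_le _ _) ?_
              rw [h0, zero_mul]
              exact zero_le
            · refine le_trans (Cardinal.mk_biUnion_le _ _) ?_
              have hs : ⨆ v : ↥(C n), #{w | G.Adj v.1 w ∧ r w v.1} ≤ μ :=
                ciSup_le' fun v => (hr v.1).le
              calc #(↥(C n)) * ⨆ v : ↥(C n), #{w | G.Adj v.1 w ∧ r w v.1}
                  ≤ μ * μ := mul_le_mul' ih hs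
                _ = μ := Cardinal.mul_eq_self h
          rw [hsucc]
          refine le_trans (Cardinal.mk_union_le _ _) ?_
          have := add_le_add ih hb
          rwa [Cardinal.add_eq_self h] at this
      have hsub : cl u ⊆ ⋃ n : ULift.{u} ℕ, C n.down := by
        intro w hw
        have : ∃ n : ℕ, w ∈ C n := by
          induction hw with
          | refl => exact ⟨0, rfl⟩
          | tail _ hst ih =>
            obtain ⟨n, hn⟩ := ih
            exact ⟨n + 1, Or.inr (Set.mem_biUnion hn hst)⟩
        obtain ⟨n, hn⟩ := this
        exact Set.mem_iUnion.2 ⟨⟨n⟩, hn⟩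
      refine le_trans (Cardinal.mk_le_mk_of_subset hsub) ?_
      refine le_trans (Cardinal.mk_iUnion_le _) ?_
      have h1 : #(ULift.{u} ℕ) = ℵ₀ := Cardinal.mk_eq_aleph0 _
      have h2 : ⨆ n : ULift.{u} ℕ, #(C n.down) ≤ μ := ciSup_le' fun n => hCcard n.down
      calc #(ULift.{u} ℕ) * ⨆ n : ULift.{u} ℕ, #(C n.down)
          ≤ ℵ₀ * μ := by rw [h1]; exact mul_le_mul' le_rfl h2
        _ ≤ μ * μ := mul_le_mul' h le_rfl
        _ = μ := Cardinal.mul_eq_self h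
    -- the q-least generator of each vertex
    have hex : ∀ v : V, ∃ u : V, v ∈ cl u ∧ ∀ u' : V, v ∈ cl u' → ¬ q u' u := by
      intro v
      obtain ⟨u, hu1, hu2⟩ := woq.wf.has_min {u : V | v ∈ cl u} ⟨v, cl_self v⟩
      exact ⟨u, hu1, hu2⟩
    choose ρ hρ1 hρ2 using hex
    -- the new ordering
    haveI := woq
    haveI := wor
    set s : V → V → Prop := fun x y => Prod.Lex q r (ρ x, x) (ρ y, y) with hs
    have hinj : Function.Injective (fun x : V => (ρ x, x)) := fun a b hab =>
      congrArg Prod.snd hab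
    let emb : s ↪r Prod.Lex q r := ⟨⟨fun x => (ρ x, x), hinj⟩, Iff.rfl⟩
    haveI wos : IsWellOrder V s := emb.isWellOrder
    -- key: any s-predecessor which is a neighbour is an r-predecessor
    have key : ∀ v w : V, G.Adj v w → s w v → r w v := by
      intro v w hadj hlex
      rcases Prod.lex_iff.1 hlex with hq | ⟨heq, hrwv⟩
      · by_contra hnr
        have hwv : w ≠ v := fun e => G.irrefl (e ▸ hadj)
        rcases trichotomous_of r w v with h1 | h1 | h1
        · exact hnr h1
        · exact hwv h1
        · have : v ∈ cl (ρ w) := cl_step _ _ _ (hρ1 w) hadj.symm h1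
          exact hρ2 v (ρ w) this hq
      · exact hrwv
    refine ⟨s, wos, ?_, ?_⟩
    · -- order type is (#V).ord : all proper initial segments are small
      refine type_eq_ord_of_small s wos ?_
      intro v
      have hsub : {w : V | s w v} ⊆ (⋃ u ∈ {u : V | q u (ρ v)}, cl u) ∪ cl (ρ v) := by
        intro w hw
        rcases Prod.lex_iff.1 hw with hq | ⟨heq, _⟩
        · exact Or.inl (Set.mem_biUnion hq (hρ1 w))
        · have hmem := hρ1 w
          rw [show ρ w = ρ v from heq] at hmem
          exact Or.inr hmem
      refine lt_of_le_of_lt (Cardinal.mk_le_mk_of_subset hsub) ?_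
      have hQ : #{u : V | q u (ρ v)} < #V := hqsmall' (ρ v)
      have hb : #(⋃ u ∈ {u : V | q u (ρ v)}, cl u) ≤ #{u : V | q u (ρ v)} * μ := by
        rcases isEmpty_or_nonempty (↥{u : V | q u (ρ v)}) with he | hne'
        · have h0 : #(↥{u : V | q u (ρ v)}) = 0 := Cardinal.mk_eq_zero _
          refine le_trans (Cardinal.mk_biUnion_le _ _) ?_
          rw [h0, zero_mul]
          exact zero_le
        · refine le_trans (Cardinal.mk_biUnion_le _ _) ?_
          exact mul_le_mul' le_rfl (ciSup_le' fun u => cl_card u.1)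
      have hμκ : μ < #V := hcase
      have h1 : #{u : V | q u (ρ v)} * μ < #V :=
        Cardinal.mul_lt_of_lt hκinf hQ hμκ
      have h2 : #(cl (ρ v)) < #V := lt_of_le_of_lt (cl_card _) hμκ
      refine lt_of_le_of_lt (Cardinal.mk_union_le _ _) ?_
      exact Cardinal.add_lt_of_lt hκinf (lt_of_le_of_lt hb h1) h2
    · -- goodness
      intro v
      have hsub : {w : V | G.Adj v w ∧ s w v} ⊆ {w : V | G.Adj v w ∧ r w v} :=
        fun w hw => ⟨hw.1, key v w hw.1 hw.2⟩
      exact lt_of_le_of_lt (Cardinal.mk_le_mk_of_subset hsub) (hr v)
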